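/- With the notation of the previous statement, define the dual counts a*_s^{±} = #{r : 1 ≤ r ≤ d, a_r^{±} ≥ s} for 1 ≤ s ≤ d′. If q⁺ = q⁻ + 1, u_{q⁺} = 1, and (r₀, s₀) is the unique pair with i_{r₀} + j_{s₀} = k_{q⁺}, then a*_{s₀}⁺ − a*_{s₀}⁻ = 1 and a*_s⁺ = a*_s⁻ for all s ≠ s₀. -/

import Mathlib

open Finset

/-- a_r^κ = #{s : i_r + j_s ≥ κ}. -/
def aCount {d d' : ℕ} (i : Fin d → ℤ) (j : Fin d' → ℤ) (κ : ℤ) (r : Fin d) : ℕ :=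
  (Finset.univ.filter fun s : Fin d' => κ ≤ i r + j s).card

/-- The dual count a*_s^κ = #{r : a_r^κ ≥ s} (s in 1-based indexing, so the
entry of `Fin d'` corresponds to the value (s : ℕ) + 1). -/
def aStar {d d' : ℕ} (i : Fin d → ℤ) (j : Fin d' → ℤ) (κ : ℤ) (s : Fin d') : ℕ :=
  (Finset.univ.filter fun r : Fin d => (s : ℕ) + 1 ≤ aCount i j κ r).card

/-- Dual version of Case 1 of §5.3: if q⁺ = q⁻ + 1, u_{q⁺} = 1 and (r₀,s₀) is
the unique pair with i_{r₀} + j_{s₀} = k_{q⁺}, then a*_{s₀}⁺ = a*_{s₀}⁻ + 1 and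
a*_s⁺ = a*_s⁻ for all s ≠ s₀. -/
theorem unique_column_jump_dual
    {d d' mlen : ℕ} (hd : Odd d) (hd' : Odd d')
    (i : Fin d → ℤ) (j : Fin d' → ℤ) (hi : StrictAnti i) (hj : StrictAnti j)
    (k : Fin mlen → ℤ) (hk : StrictAnti k)
    (hcover : ∀ r s, ∃ t, i r + j s = k t)
    (qP qM : Fin mlen) (hq : (qP : ℕ) = (qM : ℕ) + 1)
    (hu : (Finset.univ.filter fun p : Fin d × Fin d' => i p.1 + j p.2 = k qP).card = 1)
    (r₀ : Fin d) (s₀ : Fin d') (hr₀s₀ : i r₀ + j s₀ = k qP) :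
    aStar i j (k qP) s₀ = aStar i j (k qM) s₀ + 1 ∧
    ∀ s ≠ s₀, aStar i j (k qP) s = aStar i j (k qM) s := by

  have hlt : k qP < k qM := hk (by simp [Fin.lt_def, hq])
  have huniq : ∀ r s, i r + j s = k qP → r = r₀ ∧ s = s₀ := by
    intro r s hrs
    obtain ⟨p, hp⟩ := Finset.card_eq_one.mp hu
    have h1 : (r, s) ∈ Finset.univ.filter
        (fun p : Fin d × Fin d' => i p.1 + j p.2 = k qP) := by simp [hrs]
    have h2 : (r₀, s₀) ∈ Finset.univ.filter
        (fun p : Fin d × Fin d' => i p.1 + j p.2 = k qP) := by simp [hr₀s₀]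
    rw [hp, Finset.mem_singleton] at h1 h2
    rw [← h2] at h1
    exact ⟨congrArg Prod.fst h1, congrArg Prod.snd h1⟩
  have hgap : ∀ r s, k qP ≤ i r + j s → i r + j s = k qP ∨ k qM ≤ i r + j s := by
    intro r s h
    obtain ⟨t, ht⟩ := hcover r s
    rw [ht] at h ⊢
    have htle : t ≤ qP := hk.le_iff_ge.mp h
    rcases eq_or_lt_of_le htle with heq | hlt'
    · left; rw [heq]
    · right
      apply hk.antitone
      have : (t : ℕ) < (qP : ℕ) := hlt'
      omega
  -- aCount for r ≠ r₀
  have hAC : ∀ r, r ≠ r₀ → aCount i j (k qP) r = aCount i j (k qM) r := by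
    intro r hr
    unfold aCount
    congr 1
    apply Finset.filter_congr
    intro s _
    constructor
    · intro h
      rcases hgap r s h with heq | h' 
      · exact absurd (huniq r s heq).1 hr
      · exact h'
    · intro h; exact le_trans hlt.le h
  -- aCount at r₀
  have hACM : aCount i j (k qM) r₀ = (s₀ : ℕ) := by
    unfold aCount
    have : (Finset.univ.filter fun s : Fin d' => k qM ≤ i r₀ + j s) = Finset.Iio s₀ := by
      ext s
      simp only [Finset.mem_filter, Finset.mem_univ, true_and, Finset.mem_Iio]
      constructor
      · intro h
        by_contra hs
        push_neg at hs
        rcases eq_or_lt_of_le hs with heq | hlt'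
        · rw [← heq, hr₀s₀] at h; exact absurd h (not_le.mpr hlt)
        · have : i r₀ + j s < k qP := by
            have := hj hlt'
            omega
          exact absurd h (not_le.mpr (lt_trans this hlt))
      · intro hs
        have hgt : k qP < i r₀ + j s := by
          have := hj hs
          omega
        rcases hgap r₀ s hgt.le with heq | h'
        · exact absurd (huniq r₀ s heq).2 (ne_of_lt hs)
        · exact h'
    rw [this, Fin.card_Iio]
  have hACP : aCount i j (k qP) r₀ = (s₀ : ℕ) + 1 := by
    unfold aCount
    have : (Finset.univ.filter fun s : Fin d' => k qP ≤ i r₀ + j s) = Finset.Iic s₀ := by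
      ext s
      simp only [Finset.mem_filter, Finset.mem_univ, true_and, Finset.mem_Iic]
      constructor
      · intro h
        by_contra hs
        push_neg at hs
        have : i r₀ + j s < k qP := by
          have := hj hs
          omega
        exact absurd h (not_le.mpr this)
      · intro hs
        rcases eq_or_lt_of_le hs with heq | hlt'
        · rw [heq, hr₀s₀]
        · have h2 := hj hlt'
          have : k qP < i r₀ + j s := by omega
          exact this.le
    rw [this, Fin.card_Iic]
  constructor
  · unfold aStar
    have hset : (Finset.univ.filter fun r : Fin d => (s₀ : ℕ) + 1 ≤ aCount i j (k qP) r)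
        = insert r₀ (Finset.univ.filter fun r : Fin d => (s₀ : ℕ) + 1 ≤ aCount i j (k qM) r) := by
      ext r
      simp only [Finset.mem_filter, Finset.mem_univ, true_and, Finset.mem_insert]
      by_cases hr : r = r₀
      · subst hr
        simp [hACP]
      · rw [hAC r hr]
        constructor
        · intro h; exact Or.inr h
        · rintro (h | h)
          · exact absurd h hr
          · exact h
    rw [hset, Finset.card_insert_of_notMem]
    simp only [Finset.mem_filter, Finset.mem_univ, true_and, hACM]
    omega
  · intro s hs
    unfold aStar
    congr 1
    apply Finset.filter_congr
    intro r _
    by_cases hr : r = r₀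
    · subst hr
      rw [hACP, hACM]
      have : (s : ℕ) ≠ (s₀ : ℕ) := fun h => hs (Fin.ext h)
      constructor <;> (intro h; omega)
    · rw [hAC r hr]
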